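/- Let K be a field and d ≥ 1, and let D : V → W be a K-linear map between finite-dimensional K-vector spaces. Consider the K[ℤ/d]-linear map (τ − 1) ⊗ D : K[ℤ/d] ⊗ V → K[ℤ/d] ⊗ W, where τ generates ℤ/d. Then its kernel is isomorphic as a K[ℤ/d]-module to (K[ℤ/d] ⊗ ker D) ⊕ (K_triv ⊗ im D), where K_triv is the trivial one-dimensional module, and its image equals (τ − 1)K[ℤ/d] ⊗ im D. -/

import Mathlib

open TensorProduct

/-- The canonical generator `τ` of `ℤ/d` viewed in the group algebra `K[ℤ/d]`. -/
noncomputable def tau (K : Type*) [Field K] (d : ℕ) :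
    MonoidAlgebra K (Multiplicative (ZMod d)) :=
  MonoidAlgebra.of K (Multiplicative (ZMod d)) (Multiplicative.ofAdd (1 : ZMod d))

namespace KerImAux

variable (K : Type*) [Field K] (d : ℕ) [NeZero d]

local notation "G" => Multiplicative (ZMod d)
local notation "A" => MonoidAlgebra K (Multiplicative (ZMod d))

noncomputable def sigma : MonoidAlgebra K (Multiplicative (ZMod d)) :=
  ∑ g : Multiplicative (ZMod d), MonoidAlgebra.of K (Multiplicative (ZMod d)) g

lemma of_mul_sigma (g : G) : MonoidAlgebra.of K G g * sigma K d = sigma K d := by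
  unfold sigma
  rw [Finset.mul_sum]
  exact Fintype.sum_equiv (Equiv.mulLeft g) _ _ (fun h => (map_mul (MonoidAlgebra.of K G) g h).symm)

lemma sigma_apply (g : G) : (sigma K d).coeff g = 1 := by
  unfold sigma
  rw [MonoidAlgebra.coeff_sum, Finsupp.finset_sum_apply]
  simp [MonoidAlgebra.of_apply, MonoidAlgebra.single_apply]

lemma mul_sigma_eq (a : A) : a * sigma K d = (∑ g : G, a.coeff g) • sigma K d := by
  induction a using MonoidAlgebra.induction_linear with
  | zero => simp
  | add f g hf hg => simp only [add_mul, hf, hg, MonoidAlgebra.coeff_add, Finsupp.add_apply, Finset.sum_add_distrib,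
      add_smul]
  | single g r =>
      have h1 : (MonoidAlgebra.single g r : A) = r • MonoidAlgebra.of K G g := by
        simp [MonoidAlgebra.of_apply, MonoidAlgebra.smul_single]
      rw [h1, smul_mul_assoc, of_mul_sigma]
      congr 1
      simp [Finsupp.single_apply]
  
lemma tau_sub_one_mul_sigma : (tau K d - 1) * sigma K d = 0 := by
  rw [sub_mul, one_mul, tau, of_mul_sigma, sub_self]

lemma eq_smul_sigma (a : A) (h : (tau K d - 1) * a = 0) : a = a.coeff 1 • sigma K d := by
  have h' : tau K d * a = a := by
    have h2 : tau K d * a - a = 0 := by rwa [sub_mul, one_mul] at h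
    exact sub_eq_zero.mp h2
  have hshift : ∀ z : G, a.coeff (Multiplicative.ofAdd (1 : ZMod d) * z) = a.coeff z := by
    intro z
    have := congrFun (congrArg (fun x : A => (x.coeff : G → K)) h') (Multiplicative.ofAdd (1 : ZMod d) * z)
    simpa [tau, MonoidAlgebra.of_apply, MonoidAlgebra.coeff_single_mul_apply] using this.symm
  have key : ∀ n : ℕ, a.coeff ((Multiplicative.ofAdd (1 : ZMod d))^n) = a.coeff 1 := by
    intro n
    induction n with
    | zero => simp
    | succ n ih => rw [pow_succ, mul_comm, hshift, ih]
  have hall : ∀ g : G, a.coeff g = a.coeff 1 := by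
    intro g
    have hg : (Multiplicative.ofAdd (1 : ZMod d))^((Multiplicative.toAdd g).val) = g := by
      rw [← ofAdd_nsmul]
      rw [nsmul_eq_mul, mul_one]
      rw [ZMod.natCast_val, ZMod.cast_id]
      exact ofAdd_toAdd g
    rw [← hg, key]
  rw [← MonoidAlgebra.coeff_inj]
  ext g
  rw [MonoidAlgebra.coeff_smul, Finsupp.smul_apply, sigma_apply, smul_eq_mul, mul_one, hall]

lemma tmul_sigma_eq_zero {M : Type*} [AddCommGroup M] [Module K M] (m : M)
    (h : sigma K d ⊗ₜ[K] m = (0 : A ⊗[K] M)) : m = 0 := by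
  have := congrArg ((TensorProduct.lid K M).toLinearMap ∘ₗ
    LinearMap.rTensor M (Finsupp.lapply (1 : G) ∘ₗ (MonoidAlgebra.coeffLinearEquiv K).toLinearMap : A →ₗ[K] K)) h
  simpa [LinearMap.rTensor_tmul, Finsupp.lapply_apply, sigma_apply] using this

noncomputable def N2 (V : Type*) [AddCommGroup V] [Module K V] (C : Submodule K V) :
    Submodule (MonoidAlgebra K (Multiplicative (ZMod d)))
      ((MonoidAlgebra K (Multiplicative (ZMod d))) ⊗[K] V) where
  carrier := {x | ∃ c ∈ C, x = sigma K d ⊗ₜ[K] c}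
  add_mem' := by
    rintro x y ⟨c, hc, rfl⟩ ⟨c', hc', rfl⟩
    exact ⟨c + c', C.add_mem hc hc', (TensorProduct.tmul_add _ _ _).symm⟩
  zero_mem' := ⟨0, C.zero_mem, (TensorProduct.tmul_zero _ _).symm⟩
  smul_mem' := by
    rintro a x ⟨c, hc, rfl⟩
    refine ⟨(∑ g : Multiplicative (ZMod d), a.coeff g) • c, C.smul_mem _ hc, ?_⟩
    rw [TensorProduct.smul_tmul', smul_eq_mul, mul_sigma_eq, TensorProduct.smul_tmul]

set_option maxHeartbeats 1600000 in
set_option synthInstance.maxHeartbeats 200000 in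
theorem main (V W : Type*) [AddCommGroup V] [Module K V] [FiniteDimensional K V]
    [AddCommGroup W] [Module K W] [FiniteDimensional K W] (D : V →ₗ[K] W) :
    (∃ N₁ N₂ : Submodule (MonoidAlgebra K (Multiplicative (ZMod d)))
        (MonoidAlgebra K (Multiplicative (ZMod d)) ⊗[K] V),
      N₁ ⊓ N₂ = ⊥ ∧
      N₁ ⊔ N₂ = LinearMap.ker
        ((tau K d - 1) • D.baseChange (MonoidAlgebra K (Multiplicative (ZMod d)))) ∧
      Nonempty (N₁ ≃ₗ[MonoidAlgebra K (Multiplicative (ZMod d))]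
        (MonoidAlgebra K (Multiplicative (ZMod d)) ⊗[K] (LinearMap.ker D))) ∧
      (∀ (g : Multiplicative (ZMod d)) (x : N₂),
        MonoidAlgebra.of K (Multiplicative (ZMod d)) g • (x : MonoidAlgebra K (Multiplicative (ZMod d)) ⊗[K] V)
          = (x : MonoidAlgebra K (Multiplicative (ZMod d)) ⊗[K] V)) ∧
      Nonempty ((N₂.restrictScalars K) ≃ₗ[K] LinearMap.range D)) ∧
    LinearMap.range ((tau K d - 1) • D.baseChange (MonoidAlgebra K (Multiplicative (ZMod d))))
      = Submodule.map
          ((tau K d - 1) • (LinearMap.id :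
            MonoidAlgebra K (Multiplicative (ZMod d)) ⊗[K] W →ₗ[MonoidAlgebra K (Multiplicative (ZMod d))]
            MonoidAlgebra K (Multiplicative (ZMod d)) ⊗[K] W))
          (LinearMap.range ((LinearMap.range D).subtype.baseChange
            (MonoidAlgebra K (Multiplicative (ZMod d))))) := by
  classical
  obtain ⟨C, hC⟩ := Submodule.exists_isCompl (LinearMap.ker D)
  let kerP : V →ₗ[K] LinearMap.ker D := (LinearMap.ker D).projectionOnto C hC
  let CP : V →ₗ[K] C := C.projectionOnto (LinearMap.ker D) hC.symm
  -- basic compositions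
  have hDk : D ∘ₗ (LinearMap.ker D).subtype = 0 := by ext z; exact z.2
  have hCPk : CP ∘ₗ (LinearMap.ker D).subtype = 0 := by
    ext z; exact congrArg Subtype.val (Submodule.projectionOnto_apply_of_mem_right hC.symm z.2)
  have hkerPk : kerP ∘ₗ (LinearMap.ker D).subtype = LinearMap.id :=
    Submodule.projectionOnto_comp_subtype hC
  have hDCker : LinearMap.ker (D ∘ₗ C.subtype) = ⊥ := by
    rw [eq_bot_iff]
    rintro c hcm
    have hmem : (c : V) ∈ LinearMap.ker D ⊓ C := ⟨hcm, c.2⟩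
    rw [hC.inf_eq_bot] at hmem
    rw [Submodule.mem_bot] at hmem
    exact (Submodule.mem_bot _).mpr (Subtype.ext hmem)
  have hDCinj : Function.Injective ((D ∘ₗ C.subtype).baseChange (MonoidAlgebra K (Multiplicative (ZMod d)))) := by
    obtain ⟨g, hg⟩ := (D ∘ₗ C.subtype).exists_leftInverse_of_injective hDCker
    intro u v huv
    have h1 := congrArg (g.baseChange (MonoidAlgebra K (Multiplicative (ZMod d)))) huv
    rwa [← LinearMap.comp_apply, ← LinearMap.comp_apply, ← LinearMap.baseChange_comp, hg,
      LinearMap.baseChange_id, LinearMap.id_apply, LinearMap.id_apply] at h1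
  constructor
  · refine ⟨LinearMap.range ((LinearMap.ker D).subtype.baseChange
      (MonoidAlgebra K (Multiplicative (ZMod d)))), N2 K d V C, ?_, ?_, ?_, ?_, ?_⟩
    · -- N₁ ⊓ N₂ = ⊥
      rw [eq_bot_iff]
      rintro x ⟨hx1, hx2⟩
      obtain ⟨y, hy⟩ := hx1
      obtain ⟨c, hc, rfl⟩ := hx2
      have h1 := congrArg (CP.baseChange (MonoidAlgebra K (Multiplicative (ZMod d)))) hy
      rw [← LinearMap.comp_apply, ← LinearMap.baseChange_comp, hCPk, LinearMap.baseChange_zero,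
        LinearMap.zero_apply, LinearMap.baseChange_tmul] at h1
      have hCPc : CP c = ⟨c, hc⟩ := Submodule.projectionOnto_apply_left hC.symm ⟨c, hc⟩
      rw [hCPc] at h1
      have h2 := tmul_sigma_eq_zero K d _ h1.symm
      have hc0 : c = 0 := congrArg Subtype.val h2
      simp [hc0, Submodule.mem_bot]
    · -- N₁ ⊔ N₂ = ker f
      apply le_antisymm
      · refine sup_le ?_ ?_
        · rintro x ⟨y, rfl⟩
          rw [LinearMap.mem_ker, LinearMap.smul_apply, ← LinearMap.comp_apply,
            ← LinearMap.baseChange_comp, hDk, LinearMap.baseChange_zero, LinearMap.zero_apply,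
            smul_zero]
        · rintro x ⟨c, hc, rfl⟩
          rw [LinearMap.mem_ker, LinearMap.smul_apply, LinearMap.baseChange_tmul,
            TensorProduct.smul_tmul', smul_eq_mul, tau_sub_one_mul_sigma,
            TensorProduct.zero_tmul]
      · intro x hx
        have hx0 : (tau K d - 1) • (D.baseChange (MonoidAlgebra K (Multiplicative (ZMod d))) x) = 0 := hx
        have hid : (LinearMap.ker D).subtype ∘ₗ kerP + C.subtype ∘ₗ CP = LinearMap.id := by
          ext v
          exact Submodule.projection_add_projection_eq_self hC v
        have hdec : x = (LinearMap.ker D).subtype.baseChange _ (kerP.baseChange _ x)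
            + C.subtype.baseChange _ (CP.baseChange _ x) := by
          have h3 := congrArg
            (fun φ : V →ₗ[K] V => LinearMap.baseChange (MonoidAlgebra K (Multiplicative (ZMod d))) φ x) hid
          simpa [LinearMap.baseChange_add, LinearMap.baseChange_comp, LinearMap.baseChange_id]
            using h3.symm
        set z := CP.baseChange (MonoidAlgebra K (Multiplicative (ZMod d))) x with hzdef
        have hDx : D.baseChange (MonoidAlgebra K (Multiplicative (ZMod d))) x
            = (D ∘ₗ C.subtype).baseChange _ z := by
          conv_lhs => rw [hdec]
          rw [map_add, ← LinearMap.comp_apply, ← LinearMap.baseChange_comp, hDk,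
            LinearMap.baseChange_zero, LinearMap.zero_apply, zero_add,
            ← LinearMap.comp_apply, ← LinearMap.baseChange_comp]
        have hfz : (tau K d - 1) • z = 0 := by
          apply hDCinj
          rw [map_smul, ← hDx, map_zero]
          exact hx0
        -- basis argument
        let b := Module.finBasis K C
        let bb := b.baseChange (MonoidAlgebra K (Multiplicative (ZMod d)))
        have hcoef : ∀ i, (tau K d - 1) * (bb.repr z i) = 0 := by
          intro i
          have h4 : (tau K d - 1) • bb.repr z = 0 := by rw [← bb.repr.map_smul, hfz, bb.repr.map_zero]
          calc (tau K d - 1) * bb.repr z i = ((tau K d - 1) • bb.repr z) i := rfl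
            _ = 0 := by rw [h4]; rfl
        choose k hk using fun i =>
          (⟨_, eq_smul_sigma K d _ (hcoef i)⟩ : ∃ c, bb.repr z i = c • sigma K d)
        have hzσ : z = sigma K d ⊗ₜ[K] (∑ i, k i • b i) := by
          conv_lhs => rw [← bb.sum_repr z]
          rw [TensorProduct.tmul_sum]
          refine Finset.sum_congr rfl fun i _ => ?_
          rw [hk i, Module.Basis.baseChange_apply, TensorProduct.smul_tmul', smul_eq_mul, mul_one,
            TensorProduct.smul_tmul]
        rw [hdec]
        refine Submodule.add_mem_sup ⟨kerP.baseChange _ x, rfl⟩ ?_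
        show C.subtype.baseChange _ z ∈ N2 K d V C
        rw [hzσ, LinearMap.baseChange_tmul]
        exact ⟨_, (∑ i, k i • b i : C).2, rfl⟩
    · -- N₁ ≃ A ⊗ ker D
      have hinj : Function.Injective
          ((LinearMap.ker D).subtype.baseChange (MonoidAlgebra K (Multiplicative (ZMod d)))) := by
        intro u v huv
        have h1 := congrArg (kerP.baseChange (MonoidAlgebra K (Multiplicative (ZMod d)))) huv
        rwa [← LinearMap.comp_apply, ← LinearMap.comp_apply, ← LinearMap.baseChange_comp, hkerPk,
          LinearMap.baseChange_id, LinearMap.id_apply, LinearMap.id_apply] at h1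
      exact ⟨(LinearEquiv.ofInjective _ hinj).symm⟩
    · -- trivial action on N₂
      rintro g ⟨x, c, hc, rfl⟩
      show MonoidAlgebra.of K (Multiplicative (ZMod d)) g • (sigma K d ⊗ₜ[K] c) = sigma K d ⊗ₜ[K] c
      rw [TensorProduct.smul_tmul', smul_eq_mul, of_mul_sigma]
    · -- N₂ ≃ range D
      let ψ : C →ₗ[K] (MonoidAlgebra K (Multiplicative (ZMod d))) ⊗[K] V :=
        (TensorProduct.mk K (MonoidAlgebra K (Multiplicative (ZMod d))) V (sigma K d)) ∘ₗ C.subtype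
      have hψmem : ∀ c : C, ψ c ∈ (N2 K d V C).restrictScalars K := fun c => ⟨c, c.2, rfl⟩
      let ψ' := ψ.codRestrict ((N2 K d V C).restrictScalars K) hψmem
      have hbij : Function.Bijective ψ' := by
        constructor
        · intro u v huv
          have h1 : ψ u = ψ v := congrArg Subtype.val huv
          have h2 : sigma K d ⊗ₜ[K] ((u : V) - v) = 0 := by
            rw [TensorProduct.tmul_sub]
            simpa [ψ, sub_eq_zero] using h1
          have h3 := tmul_sigma_eq_zero K d _ h2
          exact Subtype.ext (by rwa [sub_eq_zero] at h3)
        · rintro ⟨x, c, hc, rfl⟩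
          exact ⟨⟨c, hc⟩, Subtype.ext rfl⟩
      have hrange : LinearMap.range (D ∘ₗ C.subtype) = LinearMap.range D := by
        rw [LinearMap.range_comp, Submodule.range_subtype]
        conv_rhs => rw [LinearMap.range_eq_map, ← hC.sup_eq_top, Submodule.map_sup]
        have hmk : Submodule.map D (LinearMap.ker D) = ⊥ := by
          rw [eq_bot_iff]
          rintro w ⟨v, hv, rfl⟩
          exact hv
        rw [hmk, bot_sup_eq]
      have hDCinj' : Function.Injective (D ∘ₗ C.subtype) := by
        rw [← LinearMap.ker_eq_bot] at *
        exact hDCker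
      exact ⟨(LinearEquiv.ofBijective ψ' hbij).symm.trans
        ((LinearEquiv.ofInjective _ hDCinj').trans (LinearEquiv.ofEq _ _ hrange))⟩
  · -- image statement
    apply le_antisymm
    · rintro _ ⟨x, rfl⟩
      have hfac : D.baseChange (MonoidAlgebra K (Multiplicative (ZMod d))) x
          = (LinearMap.range D).subtype.baseChange _ ((D.rangeRestrict).baseChange _ x) := by
        rw [← LinearMap.comp_apply, ← LinearMap.baseChange_comp,
          LinearMap.subtype_comp_codRestrict]
      refine ⟨D.baseChange _ x, ⟨(D.rangeRestrict).baseChange _ x, hfac.symm⟩, ?_⟩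
      simp only [LinearMap.smul_apply, LinearMap.id_apply]
    · rintro _ ⟨y, ⟨z, rfl⟩, rfl⟩
      induction z using TensorProduct.induction_on with
      | zero => simp
      | tmul a w =>
          obtain ⟨v, hv⟩ := w.2
          refine ⟨a ⊗ₜ v, ?_⟩
          simp only [LinearMap.smul_apply, LinearMap.baseChange_tmul, LinearMap.id_apply, hv]
          rfl
      | add u v hu hv =>
          rw [map_add, map_add]
          exact Submodule.add_mem _ hu hv

end KerImAux

/-- For a `K`-linear map `D : V → W` between finite-dimensional spaces, the kernel of
`(τ − 1) ⊗ D : K[ℤ/d] ⊗ V → K[ℤ/d] ⊗ W` decomposes, as a `K[ℤ/d]`-module, as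
`(K[ℤ/d] ⊗ ker D) ⊕ (K_triv ⊗ im D)` (a summand isomorphic to `K[ℤ/d] ⊗ ker D` plus a
summand with trivial group action, `K`-isomorphic to `im D`), and its image equals
`(τ − 1)K[ℤ/d] ⊗ im D`. -/
theorem ker_image_tau_sub_one_tensor (K : Type*) [Field K] (d : ℕ) (hd : 1 ≤ d)
    (V W : Type*) [AddCommGroup V] [Module K V] [FiniteDimensional K V]
    [AddCommGroup W] [Module K W] [FiniteDimensional K W] (D : V →ₗ[K] W) :
    (∃ N₁ N₂ : Submodule (MonoidAlgebra K (Multiplicative (ZMod d)))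
        (MonoidAlgebra K (Multiplicative (ZMod d)) ⊗[K] V),
      N₁ ⊓ N₂ = ⊥ ∧
      N₁ ⊔ N₂ = LinearMap.ker
        ((tau K d - 1) • D.baseChange (MonoidAlgebra K (Multiplicative (ZMod d)))) ∧
      Nonempty (N₁ ≃ₗ[MonoidAlgebra K (Multiplicative (ZMod d))]
        (MonoidAlgebra K (Multiplicative (ZMod d)) ⊗[K] (LinearMap.ker D))) ∧
      (∀ (g : Multiplicative (ZMod d)) (x : N₂),
        MonoidAlgebra.of K (Multiplicative (ZMod d)) g • (x : MonoidAlgebra K (Multiplicative (ZMod d)) ⊗[K] V)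
          = (x : MonoidAlgebra K (Multiplicative (ZMod d)) ⊗[K] V)) ∧
      Nonempty ((N₂.restrictScalars K) ≃ₗ[K] LinearMap.range D)) ∧
    LinearMap.range ((tau K d - 1) • D.baseChange (MonoidAlgebra K (Multiplicative (ZMod d))))
      = Submodule.map
          ((tau K d - 1) • (LinearMap.id :
            MonoidAlgebra K (Multiplicative (ZMod d)) ⊗[K] W →ₗ[MonoidAlgebra K (Multiplicative (ZMod d))]
            MonoidAlgebra K (Multiplicative (ZMod d)) ⊗[K] W))
          (LinearMap.range ((LinearMap.range D).subtype.baseChange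
            (MonoidAlgebra K (Multiplicative (ZMod d))))) := by
  haveI : NeZero d := ⟨by omega⟩
  exact KerImAux.main K d V W D
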